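/- Let (ξ_t)_{t≥1} be a sequence of independent real-valued random variables that are uniformly bounded (there exists C > 0 with |ξ_t| ≤ C almost surely for every t), and suppose the distributions of consecutive terms become uniformly close: lim_{t→∞} sup_{λ ∈ ℝ} |P(ξ_{t−1} ≤ λ) − P(ξ_t ≤ λ)| = 0. Fix a window size m ≥ 1. Then the variance of the simple moving average statistic satisfies lim_{t→∞} (Var(S_t) − Var(ξ_t)/m) = 0. -/

import Mathlib

open MeasureTheory ProbabilityTheory Filter

section Aux

variable {Ω : Type*} [MeasurableSpace Ω] {μ : Measure Ω} [IsProbabilityMeasure μ]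

lemma my_variance_add_const (X : Ω → ℝ) (hX : Integrable X μ) (c : ℝ) :
    variance (fun ω => X ω + c) μ = variance X μ := by
  have h : μ[fun ω => X ω + c] = μ[X] + c := by
    rw [integral_add hX (integrable_const c), integral_const]
    simp
  unfold variance evariance
  rw [h]
  congr 1
  refine lintegral_congr fun ω => ?_
  rw [show X ω + c - (μ[X] + c) = X ω - μ[X] by ring]

lemma toReal_meas_gt (f : Ω → ℝ) (hf : Measurable f) (a : ℝ) :
    (μ {ω | a < f ω}).toReal = 1 - (μ {ω | f ω ≤ a}).toReal := by
  have hset : {ω | a < f ω} = {ω | f ω ≤ a}ᶜ := by ext ω; simp [not_le]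
  rw [hset, measure_compl (measurableSet_le hf measurable_const) (measure_ne_top μ _), measure_univ,
    ENNReal.toReal_sub_of_le prob_le_one ENNReal.one_ne_top, ENNReal.toReal_one]

lemma toReal_prob_le_one (s : Set Ω) : (μ s).toReal ≤ 1 := by
  have := ENNReal.toReal_mono ENNReal.one_ne_top (prob_le_one (μ := μ) (s := s))
  simpa using this

end Aux

section LayerCake

variable {Ω : Type*} [MeasurableSpace Ω] {μ : Measure Ω} [IsProbabilityMeasure μ]

lemma integral_diff_abs_le (X Y : Ω → ℝ) (hXm : Measurable X) (hYm : Measurable Y)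
    (B : ℝ) (hB : 0 ≤ B)
    (hX : ∀ᵐ ω ∂μ, 0 ≤ X ω ∧ X ω ≤ B) (hY : ∀ᵐ ω ∂μ, 0 ≤ Y ω ∧ Y ω ≤ B)
    (d : ℝ)
    (hd : ∀ t : ℝ, 0 < t → |(μ {ω | t < X ω}).toReal - (μ {ω | t < Y ω}).toReal| ≤ d) :
    |∫ ω, X ω ∂μ - ∫ ω, Y ω ∂μ| ≤ B * d := by
  -- integrability
  have hXint : Integrable X μ := by
    refine (memLp_of_bounded (a := 0) (b := B) ?_ hXm.aestronglyMeasurable 1).integrable le_rfl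
    filter_upwards [hX] with ω hω using ⟨hω.1, hω.2⟩
  have hYint : Integrable Y μ := by
    refine (memLp_of_bounded (a := 0) (b := B) ?_ hYm.aestronglyMeasurable 1).integrable le_rfl
    filter_upwards [hY] with ω hω using ⟨hω.1, hω.2⟩
  set gX : ℝ → ℝ := fun t => (μ {ω | t < X ω}).toReal with hgX
  set gY : ℝ → ℝ := fun t => (μ {ω | t < Y ω}).toReal with hgY
  have hanti : ∀ (f : Ω → ℝ), Antitone (fun t => (μ {ω | t < f ω}).toReal) := by
    intro f t s hts
    exact ENNReal.toReal_mono (measure_ne_top μ _)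
      (measure_mono fun ω hω => lt_of_le_of_lt hts hω)
  -- layer cake
  have hlcX : ∫ ω, X ω ∂μ = ∫ t in Set.Ioi (0:ℝ), gX t :=
    hXint.integral_eq_integral_meas_lt (hX.mono fun ω hω => hω.1)
  have hlcY : ∫ ω, Y ω ∂μ = ∫ t in Set.Ioi (0:ℝ), gY t :=
    hYint.integral_eq_integral_meas_lt (hY.mono fun ω hω => hω.1)
  -- vanishing beyond B
  have hzero : ∀ (f : Ω → ℝ), (∀ᵐ ω ∂μ, 0 ≤ f ω ∧ f ω ≤ B) → ∀ t : ℝ, B ≤ t →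
      (μ {ω | t < f ω}).toReal = 0 := by
    intro f hf t ht
    have : μ {ω | t < f ω} = 0 := by
      rw [measure_eq_zero_iff_ae_notMem]
      filter_upwards [hf] with ω hω
      simp only [Set.mem_setOf_eq, not_lt]
      exact hω.2.trans ht
    simp [this]
  -- reduce to Ioc 0 B
  have hres : ∀ (g : ℝ → ℝ), (∀ t : ℝ, B ≤ t → g t = 0) →
      ∫ t in Set.Ioi (0:ℝ), g t = ∫ t in Set.Ioc (0:ℝ) B, g t := by
    intro g hg
    have heq : Set.EqOn g ((Set.Ioc (0:ℝ) B).indicator g) (Set.Ioi 0) := by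
      intro t ht
      by_cases htB : t ≤ B
      · rw [Set.indicator_of_mem (Set.mem_Ioc.mpr ⟨Set.mem_Ioi.mp ht, htB⟩)]
      · rw [Set.indicator_of_notMem (fun h => htB h.2), hg t (le_of_not_ge htB)]
    rw [setIntegral_congr_fun measurableSet_Ioi heq, setIntegral_indicator measurableSet_Ioc,
      Set.inter_eq_right.mpr Set.Ioc_subset_Ioi_self]
  have hresX := hres gX (fun t ht => hzero X hX t ht)
  have hresY := hres gY (fun t ht => hzero Y hY t ht)
  -- integrability of gX, gY on Ioc 0 B
  have hfin : volume (Set.Ioc (0:ℝ) B) ≠ ⊤ := by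
    rw [Real.volume_Ioc]; exact ENNReal.ofReal_ne_top
  have hIg : ∀ (f : Ω → ℝ), IntegrableOn (fun t => (μ {ω | t < f ω}).toReal)
      (Set.Ioc (0:ℝ) B) volume := by
    intro f
    refine Measure.integrableOn_of_bounded hfin
      ((hanti f).measurable.aestronglyMeasurable) (M := 1) ?_
    refine Eventually.of_forall fun t => ?_
    rw [Real.norm_eq_abs, abs_of_nonneg ENNReal.toReal_nonneg]
    exact toReal_prob_le_one _
  calc |∫ ω, X ω ∂μ - ∫ ω, Y ω ∂μ|
      = |∫ t in Set.Ioc (0:ℝ) B, (gX t - gY t)| := by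
        rw [hlcX, hlcY, hresX, hresY, integral_sub (hIg X) (hIg Y)]
    _ ≤ ∫ t in Set.Ioc (0:ℝ) B, |gX t - gY t| := by
        simpa using norm_integral_le_integral_norm (fun t => gX t - gY t)
    _ ≤ ∫ t in Set.Ioc (0:ℝ) B, d := by
        refine setIntegral_mono_on (((hIg X).sub (hIg Y)).abs) (integrableOn_const
          hfin) measurableSet_Ioc fun t ht => hd t ht.1
    _ = B * d := by
        rw [setIntegral_const, measureReal_def, Real.volume_Ioc, smul_eq_mul, sub_zero,
          ENNReal.toReal_ofReal hB]

end LayerCake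

section VarClose

variable {Ω : Type*} [MeasurableSpace Ω] {μ : Measure Ω} [IsProbabilityMeasure μ]

lemma variance_close (f g : Ω → ℝ) (hf : Measurable f) (hg : Measurable g)
    (C : ℝ) (hC : 0 < C)
    (hfb : ∀ᵐ ω ∂μ, |f ω| ≤ C) (hgb : ∀ᵐ ω ∂μ, |g ω| ≤ C)
    (d : ℝ)
    (hd : ∀ a : ℝ, |(μ {ω | f ω ≤ a}).toReal - (μ {ω | g ω ≤ a}).toReal| ≤ d) :
    |variance f μ - variance g μ| ≤ 12 * C ^ 2 * d := by
  set X : Ω → ℝ := fun ω => f ω + C with hX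
  set Y : Ω → ℝ := fun ω => g ω + C with hY
  have hXm : Measurable X := hf.add_const C
  have hYm : Measurable Y := hg.add_const C
  have hXb : ∀ᵐ ω ∂μ, 0 ≤ X ω ∧ X ω ≤ 2 * C := by
    filter_upwards [hfb] with ω hω
    rw [abs_le] at hω
    constructor <;> simp only [hX] <;> linarith [hω.1, hω.2]
  have hYb : ∀ᵐ ω ∂μ, 0 ≤ Y ω ∧ Y ω ≤ 2 * C := by
    filter_upwards [hgb] with ω hω
    rw [abs_le] at hω
    constructor <;> simp only [hY] <;> linarith [hω.1, hω.2]
  -- CDF-type bound transported to X, Y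
  have hdXY : ∀ t : ℝ, |(μ {ω | t < X ω}).toReal - (μ {ω | t < Y ω}).toReal| ≤ d := by
    intro t
    have h1 : {ω | t < X ω} = {ω | t - C < f ω} := by
      ext ω; simp only [Set.mem_setOf_eq, hX]; constructor <;> intro <;> linarith
    have h2 : {ω | t < Y ω} = {ω | t - C < g ω} := by
      ext ω; simp only [Set.mem_setOf_eq, hY]; constructor <;> intro <;> linarith
    rw [h1, h2, toReal_meas_gt f hf, toReal_meas_gt g hg]
    rw [show (1 - (μ {ω | f ω ≤ t - C}).toReal) - (1 - (μ {ω | g ω ≤ t - C}).toReal)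
        = -((μ {ω | f ω ≤ t - C}).toReal - (μ {ω | g ω ≤ t - C}).toReal) by ring, abs_neg]
    exact hd (t - C)
  -- squares
  have hX2b : ∀ᵐ ω ∂μ, 0 ≤ X ω ^ 2 ∧ X ω ^ 2 ≤ (2 * C) ^ 2 := by
    filter_upwards [hXb] with ω hω
    exact ⟨sq_nonneg _, by nlinarith [hω.1, hω.2]⟩
  have hY2b : ∀ᵐ ω ∂μ, 0 ≤ Y ω ^ 2 ∧ Y ω ^ 2 ≤ (2 * C) ^ 2 := by
    filter_upwards [hYb] with ω hω
    exact ⟨sq_nonneg _, by nlinarith [hω.1, hω.2]⟩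
  have hdXY2 : ∀ t : ℝ, 0 < t →
      |(μ {ω | t < X ω ^ 2}).toReal - (μ {ω | t < Y ω ^ 2}).toReal| ≤ d := by
    intro t ht
    have key : ∀ (Z : Ω → ℝ), (∀ᵐ ω ∂μ, 0 ≤ Z ω ∧ Z ω ≤ 2 * C) →
        μ {ω | t < Z ω ^ 2} = μ {ω | Real.sqrt t < Z ω} := by
      intro Z hZ
      refine measure_congr ?_
      rw [Filter.eventuallyEq_set]
      filter_upwards [hZ] with ω hω
      show t < Z ω ^ 2 ↔ Real.sqrt t < Z ω
      constructor
      · intro h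
        have hZpos : 0 < Z ω := by nlinarith [hω.1]
        exact (Real.sqrt_lt' hZpos).mpr h
      · intro h
        have hZpos : 0 < Z ω := lt_of_le_of_lt (Real.sqrt_nonneg t) h
        exact (Real.sqrt_lt' hZpos).mp h
    rw [key X hXb, key Y hYb]
    exact hdXY _
  -- moment bounds
  have hE1 : |∫ ω, X ω ∂μ - ∫ ω, Y ω ∂μ| ≤ 2 * C * d :=
    integral_diff_abs_le X Y hXm hYm (2 * C) (by linarith) hXb hYb d (fun t _ => hdXY t)
  have hE2 : |∫ ω, X ω ^ 2 ∂μ - ∫ ω, Y ω ^ 2 ∂μ| ≤ (2 * C) ^ 2 * d :=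
    integral_diff_abs_le (fun ω => X ω ^ 2) (fun ω => Y ω ^ 2) (hXm.pow_const 2)
      (hYm.pow_const 2) ((2 * C) ^ 2) (by positivity) hX2b hY2b d hdXY2
  -- Memℒp and integrability
  have hXmem : MemLp X 2 μ := memLp_of_bounded
    (hXb.mono fun ω hω => Set.mem_Icc.mpr ⟨hω.1, hω.2⟩) hXm.aestronglyMeasurable 2
  have hYmem : MemLp Y 2 μ := memLp_of_bounded
    (hYb.mono fun ω hω => Set.mem_Icc.mpr ⟨hω.1, hω.2⟩) hYm.aestronglyMeasurable 2
  have hfint : Integrable f μ := by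
    refine (memLp_of_bounded (a := -C) (b := C) ?_ hf.aestronglyMeasurable 1).integrable le_rfl
    filter_upwards [hfb] with ω hω using Set.mem_Icc.mpr (abs_le.mp hω)
  have hgint : Integrable g μ := by
    refine (memLp_of_bounded (a := -C) (b := C) ?_ hg.aestronglyMeasurable 1).integrable le_rfl
    filter_upwards [hgb] with ω hω using Set.mem_Icc.mpr (abs_le.mp hω)
  -- variance via shifted variables
  have hvf : variance f μ = ∫ ω, X ω ^ 2 ∂μ - (∫ ω, X ω ∂μ) ^ 2 := by
    rw [← my_variance_add_const f hfint C, variance_eq_sub hXmem]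
    rfl
  have hvg : variance g μ = ∫ ω, Y ω ^ 2 ∂μ - (∫ ω, Y ω ∂μ) ^ 2 := by
    rw [← my_variance_add_const g hgint C, variance_eq_sub hYmem]
    rfl
  -- bounds on means
  have hXmean : 0 ≤ ∫ ω, X ω ∂μ ∧ ∫ ω, X ω ∂μ ≤ 2 * C := by
    constructor
    · exact integral_nonneg_of_ae (hXb.mono fun ω hω => hω.1)
    · calc ∫ ω, X ω ∂μ ≤ ∫ _ω, 2 * C ∂μ :=
            integral_mono_ae (hXmem.integrable one_le_two) (integrable_const _)
              (hXb.mono fun ω hω => hω.2)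
        _ = 2 * C := by simp
  have hYmean : 0 ≤ ∫ ω, Y ω ∂μ ∧ ∫ ω, Y ω ∂μ ≤ 2 * C := by
    constructor
    · exact integral_nonneg_of_ae (hYb.mono fun ω hω => hω.1)
    · calc ∫ ω, Y ω ∂μ ≤ ∫ _ω, 2 * C ∂μ :=
            integral_mono_ae (hYmem.integrable one_le_two) (integrable_const _)
              (hYb.mono fun ω hω => hω.2)
        _ = 2 * C := by simp
  rw [hvf, hvg]
  set EX := ∫ ω, X ω ∂μ
  set EY := ∫ ω, Y ω ∂μ
  set EX2 := ∫ ω, X ω ^ 2 ∂μ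
  set EY2 := ∫ ω, Y ω ^ 2 ∂μ
  have hsq : |EX ^ 2 - EY ^ 2| ≤ (2 * C * d) * (4 * C) := by
    rw [show EX ^ 2 - EY ^ 2 = (EX - EY) * (EX + EY) by ring, abs_mul]
    have h1 : |EX + EY| ≤ 4 * C := by
      rw [abs_le]; constructor <;> linarith [hXmean.1, hXmean.2, hYmean.1, hYmean.2]
    have h2 : 0 ≤ |EX - EY| := abs_nonneg _
    nlinarith [hE1]
  calc |EX2 - EX ^ 2 - (EY2 - EY ^ 2)|
      ≤ |EX2 - EY2| + |EX ^ 2 - EY ^ 2| := by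
        rw [show EX2 - EX ^ 2 - (EY2 - EY ^ 2) = (EX2 - EY2) - (EX ^ 2 - EY ^ 2) by ring]
        exact abs_sub _ _
    _ ≤ (2 * C) ^ 2 * d + (2 * C * d) * (4 * C) := add_le_add hE2 hsq
    _ = 12 * C ^ 2 * d := by ring

end VarClose

lemma telescope_abs (v : ℕ → ℝ) (t : ℕ) : ∀ k : ℕ,
    |v (t - k) - v t| ≤ ∑ j ∈ Finset.range k, |v (t - j - 1) - v (t - j)| := by
  intro k
  induction k with
  | zero => simp
  | succ k ih =>
    calc |v (t - (k + 1)) - v t|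
        ≤ |v (t - (k + 1)) - v (t - k)| + |v (t - k) - v t| := abs_sub_le _ _ _
      _ ≤ |v (t - (k + 1)) - v (t - k)|
          + ∑ j ∈ Finset.range k, |v (t - j - 1) - v (t - j)| := by linarith
      _ = ∑ j ∈ Finset.range (k + 1), |v (t - j - 1) - v (t - j)| := by
          rw [Finset.sum_range_succ, Nat.sub_sub]
          ring

/-- For independent, uniformly bounded real random variables `ξ t` whose consecutive
distributions become uniformly close (`sup_λ |P(ξ_{t-1} ≤ λ) - P(ξ_t ≤ λ)| → 0`), and a fixed
window size `m ≥ 1`, the variance of the simple moving average statistic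
`S_t = (1/m) ∑_{i=t-m+1}^t ξ_i` satisfies `lim_{t→∞} (Var(S_t) - Var(ξ_t)/m) = 0`. -/
theorem sma_variance_tracks
    {Ω : Type*} [MeasurableSpace Ω] (μ : Measure Ω) [IsProbabilityMeasure μ]
    (ξ : ℕ → Ω → ℝ)
    (hmeas : ∀ t, Measurable (ξ t))
    (C : ℝ) (hC : 0 < C)
    (hbdd : ∀ t, ∀ᵐ ω ∂μ, |ξ t ω| ≤ C)
    (hindep : iIndepFun ξ μ)
    (hclose : Tendsto
      (fun t => ⨆ lam : ℝ, |(μ {ω | ξ (t - 1) ω ≤ lam}).toReal - (μ {ω | ξ t ω ≤ lam}).toReal|)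
      atTop (nhds 0))
    (m : ℕ) (hm : 1 ≤ m) :
    Tendsto (fun t =>
        variance (fun ω => (∑ i ∈ Finset.Icc (t - m + 1) t, ξ i ω) / m) μ
          - variance (ξ t) μ / m)
      atTop (nhds 0) := by
  classical
  set d : ℕ → ℝ := fun s =>
    ⨆ lam : ℝ, |(μ {ω | ξ (s - 1) ω ≤ lam}).toReal - (μ {ω | ξ s ω ≤ lam}).toReal| with hdd
  have hclose' : Tendsto d atTop (nhds 0) := hclose
  have hbdda : ∀ s : ℕ, BddAbove (Set.range fun lam : ℝ =>
      |(μ {ω | ξ (s - 1) ω ≤ lam}).toReal - (μ {ω | ξ s ω ≤ lam}).toReal|) := by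
    intro s
    refine ⟨2, fun x hx => ?_⟩
    obtain ⟨lam, rfl⟩ := hx
    have h1 := toReal_prob_le_one (μ := μ) {ω | ξ (s - 1) ω ≤ lam}
    have h2 := toReal_prob_le_one (μ := μ) {ω | ξ s ω ≤ lam}
    have h3 : (0:ℝ) ≤ (μ {ω | ξ (s - 1) ω ≤ lam}).toReal := ENNReal.toReal_nonneg
    have h4 : (0:ℝ) ≤ (μ {ω | ξ s ω ≤ lam}).toReal := ENNReal.toReal_nonneg
    rw [abs_le]
    constructor <;> linarith
  have hd_le : ∀ s : ℕ, ∀ lam : ℝ,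
      |(μ {ω | ξ (s - 1) ω ≤ lam}).toReal - (μ {ω | ξ s ω ≤ lam}).toReal| ≤ d s :=
    fun s lam => le_ciSup (hbdda s) lam
  have hd0 : ∀ s, 0 ≤ d s := fun s => le_trans (abs_nonneg _) (hd_le s 0)
  set v : ℕ → ℝ := fun s => variance (ξ s) μ with hv
  have key : ∀ s : ℕ, |v (s - 1) - v s| ≤ 12 * C ^ 2 * d s := by
    intro s
    exact variance_close (ξ (s - 1)) (ξ s) (hmeas _) (hmeas _) C hC (hbdd _) (hbdd _)
      (d s) (hd_le s)
  set G : ℕ → ℝ := fun t => 12 * C ^ 2 * ∑ j ∈ Finset.range m, d (t - j) with hG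
  have hG0 : ∀ t, 0 ≤ G t := by
    intro t
    have : 0 ≤ ∑ j ∈ Finset.range m, d (t - j) := Finset.sum_nonneg fun j _ => hd0 _
    positivity
  have stepG : ∀ t k : ℕ, k ≤ m → |v (t - k) - v t| ≤ G t := by
    intro t k hk
    calc |v (t - k) - v t| ≤ ∑ j ∈ Finset.range k, |v (t - j - 1) - v (t - j)| :=
          telescope_abs v t k
      _ ≤ ∑ j ∈ Finset.range k, 12 * C ^ 2 * d (t - j) :=
          Finset.sum_le_sum fun j _ => key (t - j)
      _ ≤ ∑ j ∈ Finset.range m, 12 * C ^ 2 * d (t - j) := by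
          refine Finset.sum_le_sum_of_subset_of_nonneg
            (Finset.range_subset_range.mpr hk) fun j _ _ => ?_
          have := hd0 (t - j)
          positivity
      _ = G t := by show _ = 12 * C ^ 2 * ∑ j ∈ Finset.range m, d (t - j); rw [Finset.mul_sum]
  have hmem : ∀ i : ℕ, MemLp (ξ i) 2 μ := by
    intro i
    refine memLp_of_bounded (a := -C) (b := C) ?_ (hmeas i).aestronglyMeasurable 2
    filter_upwards [hbdd i] with ω hω using Set.mem_Icc.mpr (abs_le.mp hω)
  have hmne : (m:ℝ) ≠ 0 := Nat.cast_ne_zero.mpr (by omega)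
  have hbound : ∀ᶠ t in atTop, ‖variance (fun ω => (∑ i ∈ Finset.Icc (t - m + 1) t, ξ i ω) / m) μ
      - variance (ξ t) μ / m‖ ≤ G t := by
    filter_upwards [eventually_ge_atTop m] with t ht
    set s := Finset.Icc (t - m + 1) t with hs
    have hcard : s.card = m := by rw [hs, Nat.card_Icc]; omega
    have hsum_eq : (fun ω => (∑ i ∈ s, ξ i ω) / (m:ℝ)) = (m:ℝ)⁻¹ • ∑ i ∈ s, ξ i := by
      ext ω
      simp [Finset.sum_apply, div_eq_inv_mul]
    have hvar : variance (fun ω => (∑ i ∈ s, ξ i ω) / (m:ℝ)) μ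
        = ((m:ℝ)⁻¹) ^ 2 * ∑ i ∈ s, v i := by
      rw [hsum_eq, variance_smul, IndepFun.variance_sum (fun i _ => hmem i)
        (fun i _ j _ hij => hindep.indepFun hij)]
    have heq : variance (fun ω => (∑ i ∈ s, ξ i ω) / (m:ℝ)) μ - v t / m
        = ((m:ℝ)⁻¹) ^ 2 * ∑ i ∈ s, (v i - v t) := by
      rw [hvar, Finset.sum_sub_distrib, Finset.sum_const, hcard, nsmul_eq_mul]
      field_simp
    rw [Real.norm_eq_abs]
    calc |variance (fun ω => (∑ i ∈ s, ξ i ω) / (m:ℝ)) μ - v t / m|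
        = ((m:ℝ)⁻¹) ^ 2 * |∑ i ∈ s, (v i - v t)| := by
          rw [heq, abs_mul, abs_of_nonneg (by positivity)]
      _ ≤ ((m:ℝ)⁻¹) ^ 2 * ∑ i ∈ s, |v i - v t| := by
          gcongr
          exact Finset.abs_sum_le_sum_abs _ _
      _ ≤ ((m:ℝ)⁻¹) ^ 2 * ∑ _i ∈ s, G t := by
          gcongr with i hi
          have hi' := Finset.mem_Icc.mp hi
          have hik : i = t - (t - i) := by omega
          have hkm : t - i ≤ m := by omega
          calc |v i - v t| = |v (t - (t - i)) - v t| := by rw [← hik]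
            _ ≤ G t := stepG t (t - i) hkm
      _ = ((m:ℝ)⁻¹) ^ 2 * ((m:ℝ) * G t) := by
          rw [Finset.sum_const, hcard, nsmul_eq_mul]
      _ ≤ G t := by
          have h1 : ((m:ℝ)⁻¹) ^ 2 * (m:ℝ) = (m:ℝ)⁻¹ := by field_simp
          have h2 : (1:ℝ) ≤ (m:ℝ) := by exact_mod_cast hm
          rw [← mul_assoc, h1]
          calc (m:ℝ)⁻¹ * G t ≤ 1 * G t := by
                have : (m:ℝ)⁻¹ ≤ 1 := by
                  rw [inv_le_one_iff₀]; right; exact h2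
                exact mul_le_mul_of_nonneg_right this (hG0 t)
            _ = G t := one_mul _
  have hGlim : Tendsto G atTop (nhds 0) := by
    have h1 : ∀ j : ℕ, Tendsto (fun t => d (t - j)) atTop (nhds 0) :=
      fun j => hclose'.comp (tendsto_sub_atTop_nat j)
    have h2 : Tendsto (fun t => ∑ j ∈ Finset.range m, d (t - j)) atTop (nhds 0) := by
      have := tendsto_finset_sum (Finset.range m) (fun j _ => h1 j)
      simpa using this
    have := h2.const_mul (12 * C ^ 2)
    simpa using this
  exact squeeze_zero_norm' hbound hGlim
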